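/- arXiv:1205.3429 — 2 statements merged into one kernel-verified Lean document; each statement's English description precedes it below -/
import Mathlib

section
/- Let k be a field with char(k) ≠ 2,3 and a,b,c,d,t,u,v,w ∈ k with u ≠ 0, u ≠ 1, cu ≠ 1, cu+bv ≠ 1, w² = u(u-1)v(v-1)(au+bv-1)(cu+dv-1) and t = uv/(cu+bv-1). Define x = t(bt-dt-1)(bt+ct-t-1)(abt-bct-a+1)/(u-1) and y = t(bt-dt-1)(bt+ct-t-1)(abt-bct-a+1)(u-bt)²·w/(u(cu-1)(u-1)²). Then y² = (x - t(bt+ct-t-1)(abt-bct-a+1))·(x - at(bt-dt-1)(bt+ct-t-1))·(x - t(1-ct)(bt-dt-1)(abt-bct-a+1)). -/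
set_option maxHeartbeats 1000000 in
/-- Classical-method verification for the class 2.7 Jacobian fibration:
the change of variables transforms the double-cover model into the Weierstrass form. -/
theorem class27_weierstrass {k : Type*} [Field k]
    (hchar2 : ringChar k ≠ 2) (hchar3 : ringChar k ≠ 3)
    (a b c d t u v w x y : k)
    (hu0 : u ≠ 0) (hu1 : u ≠ 1) (hcu : c * u ≠ 1) (hcb : c * u + b * v ≠ 1)
    (hw : w ^ 2 = u * (u - 1) * v * (v - 1) * (a * u + b * v - 1) * (c * u + d * v - 1))
    (ht : t = u * v / (c * u + b * v - 1))
    (hx : x = t * (b * t - d * t - 1) * (b * t + c * t - t - 1) * (a * b * t - b * c * t - a + 1)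
      / (u - 1))
    (hy : y = t * (b * t - d * t - 1) * (b * t + c * t - t - 1) * (a * b * t - b * c * t - a + 1)
      * (u - b * t) ^ 2 * w / (u * (c * u - 1) * (u - 1) ^ 2)) :
    y ^ 2 = (x - t * (b * t + c * t - t - 1) * (a * b * t - b * c * t - a + 1))
      * (x - a * t * (b * t - d * t - 1) * (b * t + c * t - t - 1))
      * (x - t * (1 - c * t) * (b * t - d * t - 1) * (a * b * t - b * c * t - a + 1)) := by
  have h1 : u - 1 ≠ 0 := sub_ne_zero.mpr hu1
  have h2 : c * u - 1 ≠ 0 := sub_ne_zero.mpr hcu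
  have h3 : c * u + b * v - 1 ≠ 0 := sub_ne_zero.mpr hcb
  have htv : t * (c * u + b * v - 1) = u * v := by
    rw [ht, div_mul_cancel₀ _ h3]
  have hA : v * (u - b * t) = t * (c * u - 1) := by linear_combination -htv
  have hB : (v - 1) * (u - b * t) = b * t + c * t * u - t - u := by linear_combination hA
  have hC : (a * u + b * v - 1) * (u - b * t) = -u * (a * b * t - b * c * t - a * u + 1) := by
    linear_combination b * hA
  have hD : (c * u + d * v - 1) * (u - b * t) = -(c * u - 1) * (b * t - d * t - u) := by
    linear_combination d * hA
  have hW : (u - b * t) ^ 4 * (u * (u - 1) * v * (v - 1) * (a * u + b * v - 1)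
        * (c * u + d * v - 1))
      = u * (u - 1) * (t * (c * u - 1)) * (b * t + c * t * u - t - u)
        * (-u * (a * b * t - b * c * t - a * u + 1)) * (-(c * u - 1) * (b * t - d * t - u)) := by
    calc (u - b * t) ^ 4 * (u * (u - 1) * v * (v - 1) * (a * u + b * v - 1) * (c * u + d * v - 1))
        = u * (u - 1) * (v * (u - b * t)) * ((v - 1) * (u - b * t))
          * ((a * u + b * v - 1) * (u - b * t)) * ((c * u + d * v - 1) * (u - b * t)) := by ring
      _ = _ := by rw [hA, hB, hC, hD]
  have hy2 : y ^ 2 = (t * (b * t - d * t - 1) * (b * t + c * t - t - 1)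
      * (a * b * t - b * c * t - a + 1) * (u - b * t) ^ 2) ^ 2
      * (u * (u - 1) * v * (v - 1) * (a * u + b * v - 1) * (c * u + d * v - 1))
      / (u * (c * u - 1) * (u - 1) ^ 2) ^ 2 := by
    rw [hy, div_pow, mul_pow, hw]
  have hxA : x - t * (b * t + c * t - t - 1) * (a * b * t - b * c * t - a + 1)
      = t * (b * t + c * t - t - 1) * (a * b * t - b * c * t - a + 1) * (b * t - d * t - u)
        / (u - 1) := by
    rw [hx]; field_simp; ring
  have hxB : x - a * t * (b * t - d * t - 1) * (b * t + c * t - t - 1)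
      = t * (b * t - d * t - 1) * (b * t + c * t - t - 1) * (a * b * t - b * c * t - a * u + 1)
        / (u - 1) := by
    rw [hx]; field_simp; ring
  have hxC : x - t * (1 - c * t) * (b * t - d * t - 1) * (a * b * t - b * c * t - a + 1)
      = t * (b * t - d * t - 1) * (a * b * t - b * c * t - a + 1) * (b * t + c * t * u - t - u)
        / (u - 1) := by
    rw [hx]; field_simp; ring
  rw [hy2, hxA, hxB, hxC]
  -- make the common factors atomic so that `ring` never expands them
  obtain ⟨W, hWdef⟩ : ∃ W : k,
      u * (u - 1) * v * (v - 1) * (a * u + b * v - 1) * (c * u + d * v - 1) = W := ⟨_, rfl⟩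
  obtain ⟨f1, hf1⟩ : ∃ f1 : k, b * t - d * t - 1 = f1 := ⟨_, rfl⟩
  obtain ⟨f2, hf2⟩ : ∃ f2 : k, b * t + c * t - t - 1 = f2 := ⟨_, rfl⟩
  obtain ⟨f3, hf3⟩ : ∃ f3 : k, a * b * t - b * c * t - a + 1 = f3 := ⟨_, rfl⟩
  obtain ⟨g1, hg1⟩ : ∃ g1 : k, b * t - d * t - u = g1 := ⟨_, rfl⟩
  obtain ⟨g3, hg3⟩ : ∃ g3 : k, a * b * t - b * c * t - a * u + 1 = g3 := ⟨_, rfl⟩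
  obtain ⟨p2, hp2⟩ : ∃ p2 : k, b * t + c * t * u - t - u = p2 := ⟨_, rfl⟩
  rw [hWdef, hg1, hg3, hp2] at hW
  rw [hWdef, hf1, hf2, hf3, hg1, hg3, hp2]
  have hq : (u * (c * u - 1) * (u - 1) ^ 2) ^ 2 ≠ 0 :=
    pow_ne_zero _ (mul_ne_zero (mul_ne_zero hu0 h2) (pow_ne_zero _ h1))
  have hc3 : (u - 1) * (u - 1) * (u - 1) ≠ 0 := mul_ne_zero (mul_ne_zero h1 h1) h1
  rw [div_mul_div_comm, div_mul_div_comm, div_eq_div_iff hq hc3]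
  linear_combination ((t * f1 * f2 * f3) ^ 2 * ((u - 1) * (u - 1) * (u - 1))) * hW
end

section
/- Let k be a field with char(k) ≠ 2,3 and a,b,c,d,t,u,v,w ∈ k satisfying w² = u(u-1)v(v(-1))(au+bv-1)(cu+dv-1), v ≠ 0, u ≠ 1, v ≠ 1, and t = w/(v(u-1)(v-1)). Then (u,v) satisfies the plane cubic equation t²v - u + (d+b-t²)uv + (t²-bd)uv² - (bc+ad)u²v - t²v² - acu³ + (a+c)u² = 0. -/
/-- Elimination step for the class 1.3 fibration: on the double cover
w² = u(u-1)v(v-1)(au+bv-1)(cu+dv-1) with elliptic parameter t = w/(v(u-1)(v-1)),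
the point (u, v) satisfies the displayed plane cubic. -/
theorem class13_plane_cubic {k : Type*} [Field k]
    (hchar2 : ringChar k ≠ 2) (hchar3 : ringChar k ≠ 3)
    (a b c d t u v w : k)
    (hw : w ^ 2 = u * (u - 1) * v * (v - 1) * (a * u + b * v - 1) * (c * u + d * v - 1))
    (hv0 : v ≠ 0) (hu1 : u ≠ 1) (hv1 : v ≠ 1)
    (ht : t = w / (v * (u - 1) * (v - 1))) :
    t ^ 2 * v - u + (d + b - t ^ 2) * u * v + (t ^ 2 - b * d) * u * v ^ 2
      - (b * c + a * d) * u ^ 2 * v - t ^ 2 * v ^ 2 - a * c * u ^ 3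
      + (a + c) * u ^ 2 = 0 := by
  have hu1' : u - 1 ≠ 0 := sub_ne_zero.mpr hu1
  have hv1' : v - 1 ≠ 0 := sub_ne_zero.mpr hv1
  subst ht
  field_simp
  linear_combination ((u-1) * (v-1)) * hw
end
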